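/- Let Γ be a boundedly n-acyclic group, n ≥ 1, and let V be a dual normed space (V = B(W,ℝ) for some normed space W) regarded as a trivial Γ-module. Then the bounded cochain complex 0 → V → ℓ∞(Γ, V) → ℓ∞(Γ², V) → ⋯ has vanishing cohomology in all degrees 1 ≤ i ≤ n; i.e., H^i_b(Γ; V) = 0 for 1 ≤ i ≤ n. -/

import Mathlib

set_option synthInstance.maxHeartbeats 1000000
set_option maxHeartbeats 1000000

open scoped ENNReal

universe u v

/-- `ℓ∞(S, V)`: the Banach space of bounded functions `S → V` with the sup norm. -/
noncomputable abbrev ellInfty (S : Type*) (V : Type*) [NormedAddCommGroup V] : Type _ :=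
  lp (fun _ : S => V) ∞

/-- A Banach space `X` is *injective* if for every Banach space `W`, every closed subspace
`V ⊆ W` and every bounded linear map `f : V → X`, there is a bounded linear extension of `f`
to all of `W`. -/
def IsInjectiveBanach (X : Type u) [NormedAddCommGroup X] [NormedSpace ℝ X] : Prop :=
  ∀ (W : Type v) (_ : NormedAddCommGroup W) (_ : NormedSpace ℝ W) (_ : CompleteSpace W)
    (V : Submodule ℝ W), IsClosed (V : Set W) →
      ∀ f : V →L[ℝ] X, ∃ g : W →L[ℝ] X, ∀ v : V, g v = f v
/-- The inhomogeneous coboundary operator of the bounded cochain complex of a group `Γ`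
with trivial coefficients in `V` (raw formula on arbitrary functions):
`δⁿ(f)(γ₁,…,γ_{n+1}) = f(γ₂,…,γ_{n+1}) + Σ_{i=1}^n (−1)^i f(γ₁,…,γᵢγ_{i+1},…,γ_{n+1})
  + (−1)^{n+1} f(γ₁,…,γₙ)` (here written with `0`-indexed tuples). -/
noncomputable def deltaFun (Γ : Type*) [Group Γ] {V : Type*} [AddCommGroup V] [Module ℝ V]
    (n : ℕ) (f : (Fin n → Γ) → V) : (Fin n.succ → Γ) → V :=
  fun γ =>
    f (fun j => γ j.succ)
      + ∑ i : Fin n, ((-1 : ℝ) ^ (i.1 + 1)) •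
          f (fun j => if j.1 < i.1 then γ j.castSucc
              else if j.1 = i.1 then γ j.castSucc * γ j.succ else γ j.succ)
      + ((-1 : ℝ) ^ (n + 1)) • f (fun j => γ j.castSucc)

theorem deltaFun_norm_le (Γ : Type*) [Group Γ] {V : Type*} [NormedAddCommGroup V]
    [NormedSpace ℝ V] (n : ℕ) (f : ellInfty (Fin n → Γ) V) (γ : Fin (n + 1) → Γ) :
    ‖deltaFun Γ n (f : (Fin n → Γ) → V) γ‖ ≤ (n + 2) * ‖f‖ := by
  have hb : ∀ g : Fin n → Γ, ‖(f : (Fin n → Γ) → V) g‖ ≤ ‖f‖ := fun g =>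
    lp.norm_apply_le_norm (by norm_num) f g
  have hf0 : (0 : ℝ) ≤ ‖f‖ := norm_nonneg f
  simp only [deltaFun]
  refine (norm_add₃_le).trans ?_
  have h2 : ‖∑ i : Fin n, ((-1 : ℝ) ^ (i.1 + 1)) •
      (f : (Fin n → Γ) → V) (fun j => if j.1 < i.1 then γ j.castSucc
        else if j.1 = i.1 then γ j.castSucc * γ j.succ else γ j.succ)‖ ≤ n * ‖f‖ := by
    refine (norm_sum_le _ _).trans ?_
    have key : ∀ i : Fin n, ‖((-1 : ℝ) ^ (i.1 + 1)) •
        (f : (Fin n → Γ) → V) (fun j => if j.1 < i.1 then γ j.castSucc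
          else if j.1 = i.1 then γ j.castSucc * γ j.succ else γ j.succ)‖ ≤ ‖f‖ := by
      intro i
      rw [norm_smul]
      have : |(-1 : ℝ) ^ (i.1 + 1)| = 1 := by simp
      rw [Real.norm_eq_abs, this, one_mul]
      exact hb _
    calc ∑ i : Fin n, _ ≤ ∑ _i : Fin n, ‖f‖ := Finset.sum_le_sum (fun i _ => key i)
      _ = n * ‖f‖ := by simp [Finset.sum_const, Finset.card_univ]
  have h3 : ‖((-1 : ℝ) ^ (n + 1)) •
      (f : (Fin n → Γ) → V) (fun j => γ j.castSucc)‖ ≤ ‖f‖ := by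
    rw [norm_smul]; simpa using hb _
  nlinarith [hb (fun j => γ j.succ)]

theorem deltaFun_memℓp (Γ : Type*) [Group Γ] {V : Type*} [NormedAddCommGroup V]
    [NormedSpace ℝ V] (n : ℕ) (f : ellInfty (Fin n → Γ) V) :
    Memℓp (deltaFun Γ n (f : (Fin n → Γ) → V)) ∞ := by
  apply memℓp_infty
  exact ⟨(n + 2) * ‖f‖, by rintro x ⟨γ, rfl⟩; exact deltaFun_norm_le Γ n f γ⟩

/-- The coboundary as a linear map `ℓ∞(Γⁿ, V) → ℓ∞(Γ^{n+1}, V)`. -/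
noncomputable def deltaLin (Γ : Type*) [Group Γ] (V : Type*) [NormedAddCommGroup V]
    [NormedSpace ℝ V] (n : ℕ) :
    ellInfty (Fin n → Γ) V →ₗ[ℝ] ellInfty (Fin (n + 1) → Γ) V where
  toFun f := ⟨deltaFun Γ n (f : (Fin n → Γ) → V), deltaFun_memℓp Γ n f⟩
  map_add' f g := by
    apply lp.ext
    funext γ
    show deltaFun Γ n (⇑(f + g)) γ = deltaFun Γ n ⇑f γ + deltaFun Γ n ⇑g γ
    simp only [deltaFun, lp.coeFn_add, Pi.add_apply, smul_add, Finset.sum_add_distrib]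
    abel
  map_smul' c f := by
    apply lp.ext
    funext γ
    simp [deltaFun, smul_comm c, Finset.smul_sum, smul_add]

/-- The coboundary as a bounded linear operator `δⁿ : ℓ∞(Γⁿ, V) → ℓ∞(Γ^{n+1}, V)`.
(For `n = 0` this is the map out of `ℓ∞(Γ⁰, V) ≅ V`, which is the zero map `δ⁰`.) -/
noncomputable def deltaL (Γ : Type*) [Group Γ] (V : Type*) [NormedAddCommGroup V]
    [NormedSpace ℝ V] (n : ℕ) :
    ellInfty (Fin n → Γ) V →L[ℝ] ellInfty (Fin (n + 1) → Γ) V :=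
  LinearMap.mkContinuous (deltaLin Γ V n) (n + 2) (by
    intro f
    exact lp.norm_le_of_forall_le (by positivity) (fun γ => deltaFun_norm_le Γ n f γ))

/-- `Γ` is boundedly `n`-acyclic: the bounded cochain complex
`0 → ℝ → ℓ∞(Γ) → ℓ∞(Γ²) → ⋯` with trivial real coefficients is exact in degrees
`1 ≤ i ≤ n`, i.e. `im (δ^{i}) = ker (δ^{i+1})` for all `i` with `i + 1 ≤ n`. -/
def BoundedlyAcyclic (Γ : Type*) [Group Γ] (n : ℕ) : Prop :=
  ∀ i : ℕ, i + 1 ≤ n →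
    LinearMap.range (deltaL Γ ℝ i).toLinearMap = LinearMap.ker (deltaL Γ ℝ (i + 1)).toLinearMap


section Helpers

/-- evaluation at a point as a CLM on ℓ∞ -/
noncomputable def evalCLM (S : Type*) {V : Type*} [NormedAddCommGroup V] [NormedSpace ℝ V]
    (s : S) : ellInfty S V →L[ℝ] V :=
  LinearMap.mkContinuous
    { toFun := fun f => (f : S → V) s
      map_add' := fun f g => by simp [lp.coeFn_add]
      map_smul' := fun c f => by simp [lp.coeFn_smul] }
    1 (fun f => by rw [one_mul]; exact lp.norm_apply_le_norm (by norm_num) f s)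

@[simp] lemma evalCLM_apply (S : Type*) {V : Type*} [NormedAddCommGroup V] [NormedSpace ℝ V]
    (s : S) (f : ellInfty S V) : evalCLM S s f = (f : S → V) s := rfl

/-- Hahn-Banach extension into ℓ∞ -/
lemma extend_to_ellInfty {X : Type*} [NormedAddCommGroup X] [NormedSpace ℝ X]
    (Z : Submodule ℝ X) (S : Type*) (φ : Z →L[ℝ] ellInfty S ℝ) :
    ∃ Φ : X →L[ℝ] ellInfty S ℝ, ∀ z : Z, Φ z = φ z := by
  have key : ∀ s : S, ∃ g : X →L[ℝ] ℝ, (∀ z : Z, g z = (φ z : S → ℝ) s) ∧ ‖g‖ ≤ ‖φ‖ := by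
    intro s
    obtain ⟨g, hg, hnorm⟩ := exists_extension_norm_eq Z ((evalCLM S s).comp φ)
    refine ⟨g, fun z => hg z, ?_⟩
    rw [hnorm]
    calc ‖(evalCLM S s).comp φ‖ ≤ ‖evalCLM S (V := ℝ) s‖ * ‖φ‖ :=
          ContinuousLinearMap.opNorm_comp_le _ _
      _ ≤ 1 * ‖φ‖ := by
          gcongr
          exact LinearMap.mkContinuous_norm_le _ zero_le_one _
      _ = ‖φ‖ := one_mul _
  choose g hg hgn using key
  have hmem : ∀ x : X, Memℓp (fun s => g s x) (∞ : ℝ≥0∞) := by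
    intro x
    apply memℓp_infty
    refine ⟨‖φ‖ * ‖x‖, ?_⟩
    rintro r ⟨s, rfl⟩
    exact ((g s).le_opNorm x).trans (by gcongr; exact hgn s)
  refine ⟨LinearMap.mkContinuous
    { toFun := fun x => ⟨fun s => g s x, hmem x⟩
      map_add' := fun x y => by apply lp.ext; funext s; simp [lp.coeFn_add]; rfl
      map_smul' := fun c x => by apply lp.ext; funext s; simp [lp.coeFn_smul] }
    ‖φ‖ (fun x => lp.norm_le_of_forall_le (by positivity)
      (fun s => ((g s).le_opNorm x).trans (by gcongr; exact hgn s))), ?_⟩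
  intro z
  apply lp.ext; funext s
  exact hg s z

lemma deltaFun_ev (Γ : Type*) [Group Γ] {W : Type*} [NormedAddCommGroup W] [NormedSpace ℝ W]
    (k : ℕ) (f : (Fin k → Γ) → (W →L[ℝ] ℝ)) (w : W) (γ : Fin k.succ → Γ) :
    deltaFun Γ k f γ w = deltaFun Γ k (fun x => f x w) γ := by
  simp [deltaFun, ContinuousLinearMap.sum_apply]

lemma deltaFun_zero_eq (Γ : Type*) [Group Γ] {V : Type*} [AddCommGroup V] [Module ℝ V]
    (f : (Fin 0 → Γ) → V) : deltaFun Γ 0 f = 0 := by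
  funext γ
  have he : ∀ g g' : Fin 0 → Γ, g = g' := fun g g' => funext (fun j => j.elim0)
  simp [deltaFun, he (fun j => γ j.succ) (fun j => γ j.castSucc)]

lemma deltaL_apply (Γ : Type*) [Group Γ] {V : Type*} [NormedAddCommGroup V] [NormedSpace ℝ V]
    (n : ℕ) (f : ellInfty (Fin n → Γ) V) :
    (deltaL Γ V n f : (Fin (n + 1) → Γ) → V) = deltaFun Γ n (f : (Fin n → Γ) → V) := rfl

/-- The "evaluate coordinatewise at `w`" map `ℓ∞(S, W*) → (W →L ℓ∞(S, ℝ))`. -/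
noncomputable def coordMap {S : Type*} {W : Type*} [NormedAddCommGroup W] [NormedSpace ℝ W]
    (f : ellInfty S (W →L[ℝ] ℝ)) : W →L[ℝ] ellInfty S ℝ :=
  LinearMap.mkContinuous
    { toFun := fun w => ⟨fun s => (f : S → (W →L[ℝ] ℝ)) s w, by
        apply memℓp_infty
        refine ⟨‖f‖ * ‖w‖, ?_⟩
        rintro r ⟨s, rfl⟩
        exact (((f : S → (W →L[ℝ] ℝ)) s).le_opNorm w).trans
          (by gcongr; exact lp.norm_apply_le_norm (by norm_num) f s)⟩
      map_add' := fun w w' => by apply lp.ext; funext s; simp [lp.coeFn_add]; rfl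
      map_smul' := fun c w => by apply lp.ext; funext s; simp [lp.coeFn_smul] }
    ‖f‖ (fun w => lp.norm_le_of_forall_le (by positivity)
      (fun s => (((f : S → (W →L[ℝ] ℝ)) s).le_opNorm w).trans
        (by gcongr; exact lp.norm_apply_le_norm (by norm_num) f s)))

@[simp] lemma coordMap_apply {S : Type*} {W : Type*} [NormedAddCommGroup W] [NormedSpace ℝ W]
    (f : ellInfty S (W →L[ℝ] ℝ)) (w : W) (s : S) :
    (coordMap f w : S → ℝ) s = (f : S → (W →L[ℝ] ℝ)) s w := rfl

set_option maxHeartbeats 4000000 in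
/-- Existence of a globally defined bounded linear section of the coboundary over the
cocycles, for trivial real coefficients. -/
lemma exists_section (Γ : Type*) [Group Γ] (n : ℕ) (h : BoundedlyAcyclic Γ n) :
    ∀ i : ℕ, i + 1 ≤ n →
      ∃ s : ellInfty (Fin (i + 1) → Γ) ℝ →L[ℝ] ellInfty (Fin i → Γ) ℝ,
        ∀ z, deltaL Γ ℝ (i + 1) z = 0 → deltaL Γ ℝ i (s z) = z := by
  intro i
  induction i with
  | zero =>
    intro hle
    refine ⟨0, fun z hz => ?_⟩
    have hz' : z ∈ LinearMap.ker (deltaL Γ ℝ 1).toLinearMap := hz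
    rw [← h 0 hle] at hz'
    obtain ⟨g, rfl⟩ := hz'
    have h1 : deltaL Γ ℝ 0 g = 0 := by
      apply lp.ext
      rw [deltaL_apply, deltaFun_zero_eq]
      rfl
    show deltaL Γ ℝ 0 ((0 : _ →L[ℝ] _) (deltaL Γ ℝ 0 g)) = deltaL Γ ℝ 0 g
    rw [h1, map_zero, map_zero]
  | succ i ih =>
    intro hle
    obtain ⟨s, hs⟩ := ih (by omega)
    set d : ellInfty (Fin (i + 1) → Γ) ℝ →L[ℝ] ellInfty (Fin (i + 2) → Γ) ℝ :=
      deltaL Γ ℝ (i + 1) with hd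
    set P : ellInfty (Fin (i + 1) → Γ) ℝ →L[ℝ] ellInfty (Fin (i + 1) → Γ) ℝ :=
      (deltaL Γ ℝ i).comp s with hP
    have hrange : ∀ x, d (deltaL Γ ℝ i x) = 0 := by
      intro x
      have hx : deltaL Γ ℝ i x ∈ LinearMap.ker (deltaL Γ ℝ (i + 1)).toLinearMap := by
        rw [← h i (by omega)]; exact ⟨x, rfl⟩
      exact hx
    have hPker : ∀ x, d (P x) = 0 := fun x => hrange (s x)
    have hPfix : ∀ z, d z = 0 → P z = z := fun z hz => hs z hz
    set N := LinearMap.ker P.toLinearMap with hN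
    haveI : CompleteSpace N := (ContinuousLinearMap.isClosed_ker P).completeSpace_coe
    set Z := LinearMap.ker (deltaL Γ ℝ (i + 2)).toLinearMap with hZ
    haveI : CompleteSpace Z :=
      (ContinuousLinearMap.isClosed_ker (deltaL Γ ℝ (i + 2))).completeSpace_coe
    have hDmem : ∀ x : N, (d.comp N.subtypeL) x ∈ Z := by
      intro x
      have : d (x : ellInfty (Fin (i + 1) → Γ) ℝ) ∈ LinearMap.range (deltaL Γ ℝ (i + 1)).toLinearMap :=
        ⟨x, rfl⟩
      rw [h (i + 1) hle] at this
      exact this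
    set D : N →L[ℝ] Z := (d.comp N.subtypeL).codRestrict Z hDmem with hD
    have hDval : ∀ x : N, (D x : ellInfty (Fin (i + 2) → Γ) ℝ) = d (x : _) := fun x => rfl
    have hker : LinearMap.ker D.toLinearMap = ⊥ := by
      rw [LinearMap.ker_eq_bot']
      intro x hx
      have h1 : d (x : ellInfty (Fin (i + 1) → Γ) ℝ) = 0 := by
        have h0 := congrArg (Subtype.val) hx
        change ((D x : Z) : ellInfty (Fin (i + 2) → Γ) ℝ) = _ at h0
        rw [hDval] at h0
        simpa using h0
      have h2 : P (x : ellInfty (Fin (i + 1) → Γ) ℝ) = x := hPfix _ h1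
      have h3 : P (x : ellInfty (Fin (i + 1) → Γ) ℝ) = 0 := x.2
      ext1
      rw [← h2, h3]
      rfl
    have hsurj : LinearMap.range D.toLinearMap = ⊤ := by
      rw [LinearMap.range_eq_top]
      rintro ⟨z, hz⟩
      have hz' : z ∈ LinearMap.range (deltaL Γ ℝ (i + 1)).toLinearMap := by
        rw [h (i + 1) hle]; exact hz
      obtain ⟨x, hx⟩ := hz'
      have hy : P (x - P x) = 0 := by
        have hPP : P (P x) = P x := hPfix _ (hPker x)
        rw [map_sub, hPP, sub_self]
      refine ⟨⟨x - P x, hy⟩, ?_⟩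
      ext1
      show ((D ⟨x - P x, hy⟩ : Z) : ellInfty (Fin (i + 2) → Γ) ℝ) = z
      rw [hDval]
      show d (x - P x) = z
      rw [map_sub, hPker x, sub_zero]
      exact hx
    set E := ContinuousLinearEquiv.ofBijective D hker hsurj with hE
    set T : Z →L[ℝ] ellInfty (Fin (i + 1) → Γ) ℝ :=
      N.subtypeL.comp (E.symm : Z →L[ℝ] N) with hT
    have hTsec : ∀ ζ : Z, d (T ζ) = (ζ : ellInfty (Fin (i + 2) → Γ) ℝ) := by
      intro ζ
      have h1 : T ζ = ((E.symm ζ : N) : ellInfty (Fin (i + 1) → Γ) ℝ) := rfl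
      have h2 : D (E.symm ζ) = E (E.symm ζ) := by
        rw [hE]
        exact (congrFun (ContinuousLinearEquiv.coeFn_ofBijective D hker hsurj) _).symm
      rw [h1, ← hDval (E.symm ζ), h2, E.apply_symm_apply]
    obtain ⟨Φ, hΦ⟩ := extend_to_ellInfty Z (Fin (i + 1) → Γ) T
    refine ⟨Φ, fun z hz => ?_⟩
    have hzZ : z ∈ Z := hz
    have hΦz : Φ z = T ⟨z, hzZ⟩ := hΦ ⟨z, hzZ⟩
    rw [hΦz]
    exact hTsec ⟨z, hzZ⟩

end Helpers

/-- Let `Γ` be a boundedly `n`-acyclic group, `n ≥ 1`, and let `V = B(W,ℝ)` be a dual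
normed space regarded as a trivial `Γ`-module. Then the bounded cochain complex
`0 → V → ℓ∞(Γ, V) → ℓ∞(Γ², V) → ⋯` has vanishing cohomology in all degrees `1 ≤ i ≤ n`:
`H^i_b(Γ; V) = 0` for `1 ≤ i ≤ n`. -/
theorem bounded_acyclicity_dual_coefficients (Γ : Type*) [Group Γ] (n : ℕ) (hn : 1 ≤ n)
    (h : BoundedlyAcyclic Γ n) (W : Type*) [NormedAddCommGroup W] [NormedSpace ℝ W] :
    ∀ i : ℕ, i + 1 ≤ n →
      LinearMap.range (deltaL Γ (W →L[ℝ] ℝ) i).toLinearMap =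
        LinearMap.ker (deltaL Γ (W →L[ℝ] ℝ) (i + 1)).toLinearMap := by
  intro i hle
  obtain ⟨s, hs⟩ := exists_section Γ n h i hle
  apply le_antisymm
  · -- range ⊆ ker
    rintro x ⟨g, rfl⟩
    show deltaL Γ (W →L[ℝ] ℝ) (i + 1) (deltaL Γ (W →L[ℝ] ℝ) i g) = 0
    apply lp.ext
    funext γ
    show deltaFun Γ (i + 1) (deltaL Γ (W →L[ℝ] ℝ) i g : _) γ = 0
    ext w
    rw [deltaFun_ev]
    have hcoe : (fun x => (deltaL Γ (W →L[ℝ] ℝ) i g : _) x w)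
        = (deltaL Γ ℝ i (coordMap g w) : (Fin (i + 1) → Γ) → ℝ) := by
      funext x
      rw [deltaL_apply, deltaL_apply, deltaFun_ev]
      rfl
    rw [hcoe, ← deltaL_apply]
    have hk : deltaL Γ ℝ i (coordMap g w) ∈ LinearMap.ker (deltaL Γ ℝ (i + 1)).toLinearMap := by
      rw [← h i hle]; exact ⟨coordMap g w, rfl⟩
    have hk' : deltaL Γ ℝ (i + 1) (deltaL Γ ℝ i (coordMap g w)) = 0 := hk
    rw [hk']
    rfl
  · -- ker ⊆ range
    intro f hf
    have hf' : deltaL Γ (W →L[ℝ] ℝ) (i + 1) f = 0 := hf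
    set F : W →L[ℝ] ellInfty (Fin (i + 1) → Γ) ℝ := coordMap f with hF
    have hFker : ∀ w : W, deltaL Γ ℝ (i + 1) (F w) = 0 := by
      intro w
      apply lp.ext
      funext γ
      show deltaFun Γ (i + 1) (F w : (Fin (i + 1) → Γ) → ℝ) γ = 0
      have : (F w : (Fin (i + 1) → Γ) → ℝ) = fun x => (f : _) x w := rfl
      rw [this, ← deltaFun_ev]
      rw [show deltaFun Γ (i + 1) (f : _) γ
          = (deltaL Γ (W →L[ℝ] ℝ) (i + 1) f : (Fin (i + 2) → Γ) → (W →L[ℝ] ℝ)) γ from rfl,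
        hf']
      rfl
    set G : W →L[ℝ] ellInfty (Fin i → Γ) ℝ := s.comp F with hG
    have hgmem : Memℓp (fun γ : Fin i → Γ => (evalCLM (Fin i → Γ) γ).comp G) (∞ : ℝ≥0∞) := by
      apply memℓp_infty
      refine ⟨‖G‖, ?_⟩
      rintro r ⟨γ, rfl⟩
      apply ContinuousLinearMap.opNorm_le_bound _ (norm_nonneg G)
      intro w
      calc ‖((evalCLM (Fin i → Γ) γ).comp G) w‖ = ‖(G w : (Fin i → Γ) → ℝ) γ‖ := rfl
        _ ≤ ‖G w‖ := lp.norm_apply_le_norm (by norm_num) (G w) γ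
        _ ≤ ‖G‖ * ‖w‖ := G.le_opNorm w
    set g : ellInfty (Fin i → Γ) (W →L[ℝ] ℝ) :=
      ⟨fun γ => (evalCLM (Fin i → Γ) γ).comp G, hgmem⟩ with hg
    refine ⟨g, ?_⟩
    apply lp.ext
    funext γ
    show deltaFun Γ i (g : (Fin i → Γ) → (W →L[ℝ] ℝ)) γ = (f : _) γ
    ext w
    rw [deltaFun_ev]
    have hcoe : (fun x => (g : (Fin i → Γ) → (W →L[ℝ] ℝ)) x w)
        = (G w : (Fin i → Γ) → ℝ) := rfl
    rw [hcoe]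
    have : deltaFun Γ i (G w : (Fin i → Γ) → ℝ) γ
        = (deltaL Γ ℝ i (G w) : (Fin (i + 1) → Γ) → ℝ) γ := rfl
    rw [this]
    have hsec : deltaL Γ ℝ i (G w) = F w := hs (F w) (hFker w)
    rw [hsec]
    rfl
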